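/- For every player p, every history h, every randomised move α of player p at last(h), every action a ∈ Supp(α), and every semantics ⋆ ∈ {S, A}: α ⪯^⋆_h a, i.e., α is ⋆-weakly dominated at h by the Dirac move on a. -/

import Mathlib

open scoped Classical

noncomputable section

/-- Run of a deterministic automaton along an infinite word. -/
def autRun {α Q : Type} (q0 : Q) (d : Q → α → Q) (ρ : ℕ → α) : ℕ → Q
  | 0 => q0
  | k + 1 => d (autRun q0 d ρ k) (ρ k)

/-- A concurrent game played on a finite graph. -/
structure ConcGame where
  S : Type
  A : Type
  P : Type
  [fS : Fintype S]
  [fA : Fintype A]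
  [fP : Fintype P]
  [dS : DecidableEq S]
  [dA : DecidableEq A]
  [dP : DecidableEq P]
  init : S
  act : P → S → Set A
  act_nonempty : ∀ p s, (act p s).Nonempty
  tr : S → (P → A) → S

open MeasureTheory

namespace ConcGame

attribute [instance] ConcGame.fS ConcGame.fA ConcGame.fP ConcGame.dS ConcGame.dA ConcGame.dP

inductive Sem where
  | Sure : Sem
  | Almost : Sem

variable (G : ConcGame)

instance : MeasurableSpace G.S := ⊤

/-- Randomised move of player `p` at state `s`: a probability distribution on `act p s`. -/
def Mixed (p : G.P) (s : G.S) : Type :=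
  { f : G.A → ℝ // (∀ a, 0 ≤ f a) ∧ (∑ a, f a) = 1 ∧ ∀ a, f a ≠ 0 → a ∈ G.act p s }

/-- Support of a randomised move. -/
def Supp {p : G.P} {s : G.S} (α : G.Mixed p s) : Set G.A := { a | α.1 a ≠ 0 }

/-- A randomised move is Dirac if it puts all mass on one action. -/
def IsDirac {p : G.P} {s : G.S} (α : G.Mixed p s) : Prop := ∃ a, α.1 a = 1

/-- The Dirac move on action `a`. -/
def dirac (p : G.P) (s : G.S) (a : G.A) (ha : a ∈ G.act p s) : G.Mixed p s :=
  ⟨fun b => if b = a then 1 else 0, by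
    refine ⟨fun b => ?_, ?_, fun b hb => ?_⟩
    · by_cases h : b = a <;> simp [h]
    · simp
    · by_cases h : b = a
      · subst h; exact ha
      · simp [h] at hb⟩

/-- The last state of a history (the initial state for the empty list). -/
def lastS (l : List G.S) : G.S := l.getLast?.getD G.init

/-- One step of the game graph. -/
def Step (s s' : G.S) : Prop :=
  ∃ m : G.P → G.A, (∀ p, m p ∈ G.act p s) ∧ G.tr s m = s'

/-- Histories: finite paths starting at the initial state. -/
def IsHistory (l : List G.S) : Prop := l.head? = some G.init ∧ l.Chain' G.Step

/-- Runs: infinite sequences of states. -/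
abbrev Run : Type := ℕ → G.S

/-- A strategy of player `p`: maps each history to a randomised move at its last state. -/
def Strategy (p : G.P) : Type := (l : List G.S) → G.Mixed p (G.lastS l)

/-- A profile of strategies, one per player. -/
def Profile : Type := ∀ p : G.P, G.Strategy p

/-- A strategy for the coalition `-p` of all players other than `p`. -/
def CoStrategy (p : G.P) : Type := ∀ q : G.P, q ≠ p → G.Strategy q

/-- Combining a strategy of `p` with a coalition strategy of `-p` into a profile. -/
def combine {p : G.P} (σ : G.Strategy p) (τ : G.CoStrategy p) : G.Profile :=
  fun q => if h : q = p then (by subst h; exact σ) else τ q h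

/-- One-step transition probability when each player independently samples its move. -/
def stepProb (s : G.S) (β : G.P → G.A → ℝ) (s' : G.S) : ℝ :=
  ∑ m ∈ Finset.univ.filter (fun m : G.P → G.A => G.tr s m = s'), ∏ p, β p (m p)

/-- Probability of the cylinder of a history under a profile. -/
def cylProb (σv : G.Profile) (l : List G.S) : ℝ :=
  ∏ i ∈ Finset.range (l.length - 1),
    G.stepProb (G.lastS (l.take (i + 1))) (fun p => (σv p (l.take (i + 1))).1)
      (G.lastS (l.take (i + 2)))

/-- The cylinder of a finite word: runs having it as a prefix. -/
def Cyl (l : List G.S) : Set G.Run := { ρ | ∀ i, i < l.length → ρ i = l.getD i G.init }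

/-- Histories with positive probability under a profile. -/
def HistOf (σv : G.Profile) : Set (List G.S) :=
  { l | G.IsHistory l ∧ 0 < G.cylProb σv l }

/-- The prefix of length `k+1` of a run. -/
def prefixList (ρ : G.Run) (k : ℕ) : List G.S := (List.range (k + 1)).map ρ

/-- Outcome of a profile: runs all of whose prefixes have positive probability. -/
def Outcome (σv : G.Profile) : Set G.Run := { ρ | ∀ k, G.prefixList ρ k ∈ G.HistOf σv }

/-- Histories compatible with a single strategy of player `p`. -/
def HistOfS {p : G.P} (σ : G.Strategy p) : Set (List G.S) :=
  ⋃ τ : G.CoStrategy p, G.HistOf (G.combine σ τ)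

/-- `Pr` assigns to every profile a probability measure on runs which agrees with the
    inductively defined cylinder probabilities. -/
def ValidPr (Pr : G.Profile → Measure G.Run) : Prop :=
  (∀ σv, IsProbabilityMeasure (Pr σv)) ∧
    ∀ σv l, G.IsHistory l → Pr σv (G.Cyl l) = ENNReal.ofReal (G.cylProb σv l)

/-- A profile wins a condition under the sure / almost-sure semantics. -/
def Wins (Pr : G.Profile → Measure G.Run) : Sem → G.Profile → Set G.Run → Prop
  | Sem.Sure, σv, Φ => G.Outcome σv ⊆ Φ
  | Sem.Almost, σv, Φ => Pr σv Φ = 1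

/-- A profile wins a condition from a given history, under each semantics. -/
def WinsFrom (Pr : G.Profile → Measure G.Run) : Sem → G.Profile → Set G.Run → List G.S → Prop
  | Sem.Sure, σv, Φ, l => G.Outcome σv ∩ G.Cyl l ⊆ Φ
  | Sem.Almost, σv, Φ, l => l ∈ G.HistOf σv ∧ Pr σv (Φ ∩ G.Cyl l) / Pr σv (G.Cyl l) = 1

/-- A strategy of `p` is winning if it wins against every coalition strategy. -/
def StratWins (Pr : G.Profile → Measure G.Run) (st : Sem) {p : G.P} (σ : G.Strategy p)
    (Φ : Set G.Run) : Prop :=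
  ∀ τ : G.CoStrategy p, G.Wins Pr st (G.combine σ τ) Φ

/-- A strategy of `p` is winning from a history `l`. -/
def StratWinsFrom (Pr : G.Profile → Measure G.Run) (st : Sem) {p : G.P} (σ : G.Strategy p)
    (Φ : Set G.Run) (l : List G.S) : Prop :=
  ∀ τ : G.CoStrategy p, G.WinsFrom Pr st (G.combine σ τ) Φ l

/-- Weak dominance between strategies of player `p`. -/
def WDom (Pr : G.Profile → Measure G.Run) (win : G.P → Set G.Run) (st : Sem) {p : G.P}
    (σ σ' : G.Strategy p) : Prop :=
  ∀ τ : G.CoStrategy p,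
    G.Wins Pr st (G.combine σ τ) (win p) → G.Wins Pr st (G.combine σ' τ) (win p)

/-- Strict dominance between strategies. -/
def SDom (Pr : G.Profile → Measure G.Run) (win : G.P → Set G.Run) (st : Sem) {p : G.P}
    (σ σ' : G.Strategy p) : Prop :=
  G.WDom Pr win st σ σ' ∧ ¬ G.WDom Pr win st σ' σ

/-- Equivalence of strategies. -/
def EquivS (Pr : G.Profile → Measure G.Run) (win : G.P → Set G.Run) (st : Sem) {p : G.P}
    (σ σ' : G.Strategy p) : Prop :=
  G.WDom Pr win st σ σ' ∧ G.WDom Pr win st σ' σ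

/-- A strategy is admissible iff it is not dominated. -/
def Admissible (Pr : G.Profile → Measure G.Run) (win : G.P → Set G.Run) (st : Sem) {p : G.P}
    (σ : G.Strategy p) : Prop :=
  ∀ σ' : G.Strategy p, ¬ G.SDom Pr win st σ σ'

/-- Weak dominance between randomised moves at a history. -/
def MWDom (Pr : G.Profile → Measure G.Run) (win : G.P → Set G.Run) (st : Sem) {p : G.P}
    (l : List G.S) (α α' : G.Mixed p (G.lastS l)) : Prop :=
  ∀ σ : G.Strategy p, l ∈ G.HistOfS σ → σ l = α →
    ∃ σ' : G.Strategy p, σ' l = α' ∧ G.WDom Pr win st σ σ'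

/-- Equivalence of moves at a history. -/
def MEquiv (Pr : G.Profile → Measure G.Run) (win : G.P → Set G.Run) (st : Sem) {p : G.P}
    (l : List G.S) (α α' : G.Mixed p (G.lastS l)) : Prop :=
  G.MWDom Pr win st l α α' ∧ G.MWDom Pr win st l α' α

/-- Strict dominance between moves at a history. -/
def MSDom (Pr : G.Profile → Measure G.Run) (win : G.P → Set G.Run) (st : Sem) {p : G.P}
    (l : List G.S) (α α' : G.Mixed p (G.lastS l)) : Prop :=
  G.MWDom Pr win st l α α' ∧ ¬ G.MWDom Pr win st l α' α

/-- A move is admissible at a history iff no move dominates it there. -/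
def MAdmissible (Pr : G.Profile → Measure G.Run) (win : G.P → Set G.Run) (st : Sem) {p : G.P}
    (l : List G.S) (α : G.Mixed p (G.lastS l)) : Prop :=
  ∀ α' : G.Mixed p (G.lastS l), ¬ G.MSDom Pr win st l α α'

/-- A strategy is locally admissible (LA) iff it plays admissible moves at every history. -/
def LA (Pr : G.Profile → Measure G.Run) (win : G.P → Set G.Run) (st : Sem) {p : G.P}
    (σ : G.Strategy p) : Prop :=
  ∀ l, G.IsHistory l → G.MAdmissible Pr win st l (σ l)

/-- The value of a history w.r.t. a strategy: 1 if winning from it, 0 if the coalition can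
    both let the strategy win and make it lose, -1 otherwise. -/
def ValStrat (Pr : G.Profile → Measure G.Run) (win : G.P → Set G.Run) (st : Sem) {p : G.P}
    (l : List G.S) (σ : G.Strategy p) : ℤ :=
  if G.StratWinsFrom Pr st σ (win p) l then 1
  else if (∃ τ : G.CoStrategy p, G.WinsFrom Pr st (G.combine σ τ) (win p) l) then 0
  else -1

/-- The value of a history for player `p`: the best value over the player's strategies. -/
def ValH (Pr : G.Profile → Measure G.Run) (win : G.P → Set G.Run) (st : Sem) (p : G.P)
    (l : List G.S) : ℤ :=
  if (∃ σ : G.Strategy p, G.ValStrat Pr win st l σ = 1) then 1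
  else if (∃ σ : G.Strategy p, G.ValStrat Pr win st l σ = 0) then 0
  else -1

/-- Strongly cooperative optimal strategies. -/
def SCO (Pr : G.Profile → Measure G.Run) (win : G.P → Set G.Run) (st : Sem) {p : G.P}
    (σ : G.Strategy p) : Prop :=
  ∀ l ∈ G.HistOfS σ, G.ValStrat Pr win st l σ = G.ValH Pr win st p l

/-- The full action tuple obtained from `a` for `p` and `c` for the coalition. -/
def combAct {p : G.P} (a : G.A) (c : ∀ q : G.P, q ≠ p → G.A) : G.P → G.A :=
  fun q => if h : q = p then (by subst h; exact a) else c q h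

/-- The tuple of one-step distributions obtained from a move of `p` and coalition moves. -/
def combMix {p : G.P} {s : G.S} (α : G.Mixed p s) (γ : ∀ q : G.P, q ≠ p → G.Mixed q s) :
    G.P → G.A → ℝ :=
  fun q => if h : q = p then (by subst h; exact α.1) else (γ q h).1

/-- Simple safety games: each player loses exactly the runs visiting its bad states, and
    bad states are closed under steps. -/
def SimpleSafety (win : G.P → Set G.Run) : Prop :=
  ∃ Bad : G.P → Set G.S,
    (∀ p, win p = { ρ : G.Run | ∀ i, ρ i ∉ Bad p }) ∧
    ∀ p s, s ∈ Bad p → ∀ s', G.Step s s' → s' ∈ Bad p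

/-- Prefix-independent winning conditions. -/
def PrefIndep (Φ : Set G.Run) : Prop :=
  ∀ (ρ : G.Run) (k : ℕ), ρ ∈ Φ ↔ (fun i => ρ (i + k)) ∈ Φ

/-- `stf` and `plf` give the unique state and player where each action is available. -/
def UniqueAvail (stf : G.A → G.S) (plf : G.A → G.P) : Prop :=
  ∀ (q : G.P) (s : G.S) (a : G.A), a ∈ G.act q s → plf a = q ∧ stf a = s

/-- An action of player `q` is ⋆-LA if its Dirac move is admissible at every history where
    it is available. -/
def LAAct (Pr : G.Profile → Measure G.Run) (win : G.P → Set G.Run) (st : Sem)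
    (q : G.P) (a : G.A) : Prop :=
  ∀ (l : List G.S) (_ : G.IsHistory l) (ha : a ∈ G.act q (G.lastS l)),
    G.MAdmissible Pr win st l (G.dirac q (G.lastS l) a ha)

/-- Current `S`-component of a history of the derived game. -/
def dCur (l : List (G.S × (G.P → G.A))) : G.S := (l.getLast?.map Prod.fst).getD G.init

/-- Legal joint action in the derived game: available and ⋆-LA for every player. -/
def DLegal (Pr : G.Profile → Measure G.Run) (win : G.P → Set G.Run) (st : Sem)
    (s : G.S) (m : G.P → G.A) : Prop :=
  ∀ q, m q ∈ G.act q s ∧ G.LAAct Pr win st q (m q)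

/-- Histories of the derived game `G⋆_p` (the part after the initial state). -/
def IsDHistory (Pr : G.Profile → Measure G.Run) (win : G.P → Set G.Run) (st : Sem)
    (l : List (G.S × (G.P → G.A))) : Prop :=
  ∀ i (hi : i < l.length),
    G.DLegal Pr win st (G.dCur (l.take i)) (l.get ⟨i, hi⟩).2 ∧
    (l.get ⟨i, hi⟩).1 = G.tr (G.dCur (l.take i)) (l.get ⟨i, hi⟩).2

/-- Observation of a derived history: the projection to states. -/
def oHist (l : List (G.S × (G.P → G.A))) : List G.S := G.init :: l.map Prod.fst

/-- Observation-based Dirac strategies of player `p` in the derived game. -/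
def IsDStrategy (Pr : G.Profile → Measure G.Run) (win : G.P → Set G.Run) (st : Sem)
    (p : G.P) (σb : List (G.S × (G.P → G.A)) → G.A) : Prop :=
  (∀ l, G.IsDHistory Pr win st l → σb l ∈ G.act p (G.dCur l) ∧ G.LAAct Pr win st p (σb l)) ∧
  (∀ l l', G.oHist l = G.oHist l' → σb l = σb l')

/-- `σb` is a realisation of the strategy `σ` in the derived game. -/
def IsRealisation (Pr : G.Profile → Measure G.Run) (win : G.P → Set G.Run) (st : Sem)
    (p : G.P) (σ : G.Strategy p) (σb : List (G.S × (G.P → G.A)) → G.A) : Prop :=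
  G.IsDStrategy Pr win st p σb ∧
  ∀ l, G.IsDHistory Pr win st l → σb l ∈ G.Supp (σ (G.oHist l))

/-- The prefix of length `k` of a derived run. -/
def dPrefix (ρb : ℕ → G.S × (G.P → G.A)) (k : ℕ) : List (G.S × (G.P → G.A)) :=
  (List.range k).map ρb

/-- Outcome of a player-`p` strategy in the derived game: all derived runs consistent with
    it in which all players play legal ⋆-LA Dirac actions. -/
def DOutcome (Pr : G.Profile → Measure G.Run) (win : G.P → Set G.Run) (st : Sem)
    (p : G.P) (σb : List (G.S × (G.P → G.A)) → G.A) : Set (ℕ → G.S × (G.P → G.A)) :=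
  { ρb | ∀ k,
      G.DLegal Pr win st (G.dCur (G.dPrefix ρb k)) (ρb k).2 ∧
      (ρb k).2 p = σb (G.dPrefix ρb k) ∧
      (ρb k).1 = G.tr (G.dCur (G.dPrefix ρb k)) (ρb k).2 }

/-- Observation of a derived run: the induced run of `G`. -/
def oRun (ρb : ℕ → G.S × (G.P → G.A)) : G.Run :=
  fun k => match k with
  | 0 => G.init
  | Nat.succ n => (ρb n).1

/-- Value of a state for player `q` (well defined for prefix-independent conditions). -/
def ValSt (Pr : G.Profile → Measure G.Run) (win : G.P → Set G.Run) (st : Sem)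
    (q : G.P) (s : G.S) : ℤ :=
  if (∃ l, G.IsHistory l ∧ G.lastS l = s ∧ G.ValH Pr win st q l = 1) then 1
  else if (∃ l, G.IsHistory l ∧ G.lastS l = s ∧ G.ValH Pr win st q l = 0) then 0
  else -1

/-- States of the derived game where player `q` has value 0 but another choice of the
    coalition could have helped `q`. -/
def Help (Pr : G.Profile → Measure G.Run) (win : G.P → Set G.Run) (st : Sem)
    (stf : G.A → G.S) (q : G.P) : Set (G.S × (G.P → G.A)) :=
  { x | G.ValSt Pr win st q x.1 = 0 ∧
      ∃ c : ∀ r : G.P, r ≠ q → G.A, (∀ r hr, c r hr ∈ G.act r (stf (x.2 q))) ∧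
        0 ≤ G.ValSt Pr win st q (G.tr (stf (x.2 q)) (G.combAct (x.2 q) c)) ∧
        G.tr (stf (x.2 q)) (G.combAct (x.2 q) c) ≠ x.1 }

/-- The formula φ⁰_q evaluated on a derived run. -/
def phi0 (Pr : G.Profile → Measure G.Run) (win : G.P → Set G.Run) (st : Sem)
    (stf : G.A → G.S) (q : G.P) (ρb : ℕ → G.S × (G.P → G.A)) : Prop :=
  (∃ k, G.ValSt Pr win st q (G.oRun ρb k) ≠ 0) ∨
  (G.oRun ρb ∈ win q) ∨
  (∀ k, ∃ j, k ≤ j ∧ ρb j ∈ G.Help Pr win st stf q)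

/-- The formula φ¹_q evaluated on a derived run. -/
def phi1 (Pr : G.Profile → Measure G.Run) (win : G.P → Set G.Run) (st : Sem)
    (q : G.P) (ρb : ℕ → G.S × (G.P → G.A)) : Prop :=
  (∃ k, G.ValSt Pr win st q (G.oRun ρb k) = 1) → G.oRun ρb ∈ win q

/-- ω-regular sets of runs: recognised by a deterministic finite parity automaton. -/
def IsOmegaRegular (Φ : Set G.Run) : Prop :=
  ∃ (Q : Type) (_ : Fintype Q) (q0 : Q) (d : Q → G.S → Q) (c : Q → ℕ),
    Φ = { ρ : G.Run | ∃ n, Even n ∧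
      Set.Infinite { k | c (autRun q0 d ρ k) = n } ∧
      ∀ m, Set.Infinite { k | c (autRun q0 d ρ k) = m } → n ≤ m }

/-- Finite-memory strategies: realised by a finite stochastic Moore machine. -/
def FiniteMemory {p : G.P} (σ : G.Strategy p) : Prop :=
  ∃ (M : Type) (_ : Fintype M) (m0 : M) (upd : M → G.S → M)
    (out : M → (s : G.S) → G.Mixed p s),
    ∀ l : List G.S, σ l = out (l.foldl upd m0) (G.lastS l)

end ConcGame


/-! ### Auxiliary development for stmt1 -/

namespace ConcGame

variable {G : ConcGame}

/-- Modify a strategy at a single history. -/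
def modStrat {p : G.P} (σ : G.Strategy p) (l : List G.S) (β : G.Mixed p (G.lastS l)) :
    G.Strategy p :=
  fun l' => if h : l' = l then cast (congrArg (fun t => G.Mixed p (G.lastS t)) h).symm β
    else σ l'

lemma modStrat_self {p : G.P} (σ : G.Strategy p) (l : List G.S) (β : G.Mixed p (G.lastS l)) :
    modStrat σ l β l = β := by
  simp [modStrat]

lemma modStrat_ne {p : G.P} (σ : G.Strategy p) (l : List G.S) (β : G.Mixed p (G.lastS l))
    {l' : List G.S} (h : l' ≠ l) : modStrat σ l β l' = σ l' := by
  simp [modStrat, h]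

lemma combine_self {p : G.P} (σ : G.Strategy p) (τ : G.CoStrategy p) :
    G.combine σ τ p = σ := by
  simp [ConcGame.combine]

lemma combine_ne {p : G.P} (σ : G.Strategy p) (τ : G.CoStrategy p) {q : G.P} (h : q ≠ p) :
    G.combine σ τ q = τ q h := by
  simp [ConcGame.combine, h]

lemma stepProb_nonneg (s : G.S) (β : G.P → G.A → ℝ) (hβ : ∀ q b, 0 ≤ β q b) (s' : G.S) :
    0 ≤ G.stepProb s β s' :=
  Finset.sum_nonneg fun m _ => Finset.prod_nonneg fun q _ => hβ q (m q)

lemma stepProb_sum (s : G.S) (β : G.P → G.A → ℝ) (hβ : ∀ q, ∑ b, β q b = 1) :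
    ∑ s', G.stepProb s β s' = 1 := by
  unfold stepProb
  rw [Finset.sum_fiberwise]
  rw [← Fintype.piFinset_univ, ← Finset.prod_univ_sum]
  simp [hβ]

lemma step_of_stepProb_ne_zero {s s' : G.S} {β : G.P → G.A → ℝ}
    (hβ : ∀ q b, β q b ≠ 0 → b ∈ G.act q s) (h : G.stepProb s β s' ≠ 0) : G.Step s s' := by
  unfold stepProb at h
  obtain ⟨m, hm, hne⟩ := Finset.exists_ne_zero_of_sum_ne_zero h
  rw [Finset.mem_filter] at hm
  refine ⟨m, fun q => hβ q (m q) ?_, hm.2⟩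
  intro h0
  exact hne (Finset.prod_eq_zero (Finset.mem_univ q) h0)

lemma stepProb_lin (s s' : G.S) (p : G.P) (β β1 β2 : G.P → G.A → ℝ) (c d : ℝ)
    (hne : ∀ q, q ≠ p → β q = β1 q ∧ β q = β2 q)
    (hp : ∀ b, β p b = c * β1 p b + d * β2 p b) :
    G.stepProb s β s' = c * G.stepProb s β1 s' + d * G.stepProb s β2 s' := by
  unfold stepProb
  rw [Finset.mul_sum, Finset.mul_sum, ← Finset.sum_add_distrib]
  refine Finset.sum_congr rfl fun m _ => ?_
  have e : ∀ γ : G.P → G.A → ℝ, ∏ q, γ q (m q)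
      = γ p (m p) * ∏ q ∈ Finset.univ.erase p, γ q (m q) :=
    fun γ => (Finset.mul_prod_erase _ _ (Finset.mem_univ p)).symm
  have e1 : ∏ q ∈ Finset.univ.erase p, β1 q (m q) = ∏ q ∈ Finset.univ.erase p, β q (m q) :=
    Finset.prod_congr rfl fun q hq => by rw [(hne q (Finset.ne_of_mem_erase hq)).1]
  have e2 : ∏ q ∈ Finset.univ.erase p, β2 q (m q) = ∏ q ∈ Finset.univ.erase p, β q (m q) :=
    Finset.prod_congr rfl fun q hq => by rw [(hne q (Finset.ne_of_mem_erase hq)).2]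
  rw [e β, e β1, e β2, e1, e2, hp (m p)]
  ring

lemma cylProb_nonneg (σv : G.Profile) (m : List G.S) : 0 ≤ G.cylProb σv m :=
  Finset.prod_nonneg fun i _ =>
    stepProb_nonneg _ _ (fun q b => (σv q _).2.1 b) _

lemma cylProb_append (σv : G.Profile) (m : List G.S) (hm : m ≠ []) (s : G.S) :
    G.cylProb σv (m ++ [s]) =
      G.cylProb σv m * G.stepProb (G.lastS m) (fun p => (σv p m).1) s := by
  obtain ⟨n, hn⟩ : ∃ n, m.length = n + 1 :=
    ⟨m.length - 1, (Nat.succ_pred_eq_of_pos (List.length_pos_iff.mpr hm)).symm⟩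
  unfold cylProb
  have hlen : (m ++ [s]).length = n + 2 := by simp [hn]
  rw [hlen, hn]
  have h1 : n + 2 - 1 = n + 1 := rfl
  have h2 : n + 1 - 1 = n := rfl
  rw [h1, h2, Finset.prod_range_succ]
  have htake : ∀ k, k ≤ m.length → (m ++ [s]).take k = m.take k := fun k hk =>
    List.take_append_of_le_length hk
  congr 1
  · refine Finset.prod_congr rfl fun i hi => ?_
    rw [Finset.mem_range] at hi
    rw [htake (i+1) (by omega), htake (i+2) (by omega)]
  · have ht1 : (m ++ [s]).take (n + 1) = m := by
      rw [htake (n+1) (by omega), ← hn, List.take_length]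
    have ht2 : (m ++ [s]).take (n + 2) = m ++ [s] := by
      apply List.take_of_length_le
      simp [hn]
    rw [ht1, ht2]
    have hlast : G.lastS (m ++ [s]) = s := by
      simp [lastS, List.getLast?_concat]
    rw [hlast]

lemma Cyl_anti (m m' : List G.S) : G.Cyl (m ++ m') ⊆ G.Cyl m := by
  intro ρ h i hi
  have := h i (by simp; omega)
  rwa [List.getD_append _ _ _ _ hi] at this

lemma Cyl_succ (m : List G.S) : G.Cyl m = ⋃ s : G.S, G.Cyl (m ++ [s]) := by
  ext ρ
  constructor
  · intro h
    refine Set.mem_iUnion.mpr ⟨ρ m.length, fun i hi => ?_⟩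
    simp only [List.length_append, List.length_singleton] at hi
    rcases lt_or_eq_of_le (Nat.lt_succ_iff.mp hi) with hlt | heq
    · rw [List.getD_append _ _ _ _ hlt]; exact h i hlt
    · subst heq
      rw [List.getD_append_right _ _ _ _ (le_refl _)]
      simp
  · intro h
    obtain ⟨s, hs⟩ := Set.mem_iUnion.mp h
    exact Cyl_anti m [s] hs

lemma measurable_Cyl (m : List G.S) : MeasurableSet (G.Cyl m) := by
  have : G.Cyl m = ⋂ i, ⋂ (_ : i < m.length), {ρ : G.Run | ρ i = m.getD i G.init} := by
    ext ρ; simp [ConcGame.Cyl]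
  rw [this]
  refine MeasurableSet.iInter fun i => MeasurableSet.iInter fun _ => ?_
  have hs : MeasurableSet ({m.getD i G.init} : Set G.S) := trivial
  have := (measurable_pi_apply (X := fun _ : ℕ => G.S) i) hs
  convert this using 1
  rfl

lemma Cyl_disjoint_of (m : List G.S) {s s' : G.S} (h : s ≠ s') :
    Disjoint (G.Cyl (m ++ [s])) (G.Cyl (m ++ [s'])) := by
  refine Set.disjoint_left.mpr fun ρ h1 h2 => h ?_
  have hlen : m.length < (m ++ [s]).length := by simp
  have e1 := h1 m.length hlen
  have e2 := h2 m.length (by simpa using hlen)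
  rw [List.getD_append_right _ _ _ _ (le_refl _)] at e1 e2
  simp at e1 e2
  rw [← e1, ← e2]

lemma history_append_iff {l : List G.S} (hl : G.IsHistory l) (s : G.S) :
    G.IsHistory (l ++ [s]) ↔ G.Step (G.lastS l) s := by
  obtain ⟨hh, hc⟩ := hl
  have hne : l ≠ [] := by intro h; subst h; simp at hh
  have hlast : l.getLast? = some (G.lastS l) := by
    rw [List.getLast?_eq_getLast hne]
    simp [lastS, List.getLast?_eq_getLast hne]
  constructor
  · rintro ⟨-, hch⟩
    unfold List.Chain' at hch
    rw [List.isChain_append] at hch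
    exact hch.2.2 _ (by rw [hlast]; exact Option.mem_def.mpr rfl) s rfl
  · intro hstep
    refine ⟨by rw [List.head?_append, hh]; rfl, ?_⟩
    unfold List.Chain'
    rw [List.isChain_append]
    exact ⟨hc, List.isChain_singleton _, fun x hx y hy => by
      rw [hlast] at hx
      simp at hx hy
      rw [← hx, ← hy] at *
      exact hstep⟩

lemma history_singleton : G.IsHistory [G.init] := ⟨rfl, List.isChain_singleton _⟩

lemma cylProb_singleton (σv : G.Profile) (s : G.S) : G.cylProb σv [s] = 1 := by
  simp [ConcGame.cylProb]

lemma cylProb_nil (σv : G.Profile) : G.cylProb σv [] = 1 := by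
  simp [ConcGame.cylProb]

/-- Probability assigned by a valid `Pr` to the cylinder of an arbitrary list. -/
def hP (G : ConcGame) (σv : G.Profile) (m : List G.S) : ℝ :=
  if G.IsHistory m ∨ m = [] then G.cylProb σv m else 0

lemma hP_nonneg (σv : G.Profile) (m : List G.S) : 0 ≤ G.hP σv m := by
  unfold hP; split
  · exact cylProb_nonneg σv m
  · exact le_refl 0

lemma pr_cyl {Pr : G.Profile → Measure G.Run} (hPr : G.ValidPr Pr) (σv : G.Profile) :
    ∀ m : List G.S, Pr σv (G.Cyl m) = ENNReal.ofReal (G.hP σv m) := by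
  have hprob := hPr.1
  intro m
  induction m using List.reverseRecOn with
  | nil =>
    have : G.Cyl [] = Set.univ := by ext ρ; simp [ConcGame.Cyl]
    rw [this]
    have := (hprob σv).measure_univ
    rw [this]
    simp [hP, cylProb_nil]
  | append_singleton l s ih =>
    by_cases hist : G.IsHistory (l ++ [s])
    · rw [hPr.2 σv _ hist]
      simp [hP, hist]
    · have hP0 : G.hP σv (l ++ [s]) = 0 := by simp [hP, hist]
      rw [hP0, ENNReal.ofReal_zero]
      by_cases histl : G.IsHistory l
      · -- partition argument
        have hstep : ¬ G.Step (G.lastS l) s := fun hs =>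
          hist ((history_append_iff histl s).mpr hs)
        have hlne : l ≠ [] := by intro h; subst h; exact absurd histl.1 (by simp)
        have hpart : Pr σv (G.Cyl l) = ∑ s' : G.S, Pr σv (G.Cyl (l ++ [s'])) := by
          conv_lhs => rw [Cyl_succ l]
          rw [measure_iUnion (fun s1 s2 h => Cyl_disjoint_of l h)
            (fun s' => measurable_Cyl _), tsum_fintype]
        have hsplit := Finset.sum_filter_add_sum_filter_not Finset.univ
          (fun s' => G.Step (G.lastS l) s') (fun s' => Pr σv (G.Cyl (l ++ [s'])))
        have hval : ∑ s' ∈ Finset.univ.filter (fun s' => G.Step (G.lastS l) s'),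
            Pr σv (G.Cyl (l ++ [s'])) = ENNReal.ofReal (G.cylProb σv l) := by
          have h1 : ∀ s' ∈ Finset.univ.filter (fun s' => G.Step (G.lastS l) s'),
              Pr σv (G.Cyl (l ++ [s'])) = ENNReal.ofReal (G.cylProb σv (l ++ [s'])) := by
            intro s' hs'
            rw [Finset.mem_filter] at hs'
            exact hPr.2 σv _ ((history_append_iff histl s').mpr hs'.2)
          rw [Finset.sum_congr rfl h1, ← ENNReal.ofReal_sum_of_nonneg
            (fun i _ => cylProb_nonneg σv _)]
          congr 1
          have h2 : ∀ s', G.cylProb σv (l ++ [s'])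
              = G.cylProb σv l * G.stepProb (G.lastS l) (fun p => (σv p l).1) s' :=
            fun s' => cylProb_append σv l hlne s'
          calc ∑ s' ∈ Finset.univ.filter (fun s' => G.Step (G.lastS l) s'),
                G.cylProb σv (l ++ [s'])
              = ∑ s' : G.S, G.cylProb σv (l ++ [s']) := by
                refine Finset.sum_subset (Finset.filter_subset _ _) fun s' _ hs' => ?_
                rw [Finset.mem_filter, not_and] at hs'
                have hns : ¬ G.Step (G.lastS l) s' := hs' (Finset.mem_univ _)
                rw [h2 s']
                have : G.stepProb (G.lastS l) (fun p => (σv p l).1) s' = 0 := by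
                  by_contra hzz
                  exact hns (step_of_stepProb_ne_zero
                    (fun q b hb => (σv q l).2.2.2 b hb) hzz)
                rw [this, mul_zero]
            _ = G.cylProb σv l := by
                rw [Finset.sum_congr rfl fun s' _ => h2 s', ← Finset.mul_sum,
                  stepProb_sum _ _ (fun q => (σv q l).2.2.1), mul_one]
        have hPl : Pr σv (G.Cyl l) = ENNReal.ofReal (G.cylProb σv l) := hPr.2 σv l histl
        have hzero : ∑ s' ∈ Finset.univ.filter
            (fun s' => ¬ G.Step (G.lastS l) s'), Pr σv (G.Cyl (l ++ [s'])) = 0 := by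
          have heq : ENNReal.ofReal (G.cylProb σv l)
              = ENNReal.ofReal (G.cylProb σv l) + ∑ s' ∈ Finset.univ.filter
                (fun s' => ¬ G.Step (G.lastS l) s'), Pr σv (G.Cyl (l ++ [s'])) := by
            conv_lhs => rw [← hPl, hpart]
            rw [← hsplit, hval]
          have h0 : ENNReal.ofReal (G.cylProb σv l) + ∑ s' ∈ Finset.univ.filter
              (fun s' => ¬ G.Step (G.lastS l) s'), Pr σv (G.Cyl (l ++ [s']))
              = ENNReal.ofReal (G.cylProb σv l) + 0 := by
            rw [add_zero]; exact heq.symm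
          exact (ENNReal.add_right_inj ENNReal.ofReal_ne_top).mp h0
        have := (Finset.sum_eq_zero_iff.mp hzero) s (by simp [hstep])
        exact this
      · by_cases hl0 : l = []
        · subst hl0
          simp only [List.nil_append]
          have hs : s ≠ G.init := by
            intro h; subst h; exact hist history_singleton
          have h1 : Pr σv (G.Cyl [G.init]) = 1 := by
            rw [hPr.2 σv _ history_singleton, cylProb_singleton]
            simp
          have hsub : G.Cyl [s] ⊆ (G.Cyl [G.init])ᶜ := by
            intro ρ hρ hρ'
            have e1 := hρ 0 (by simp)
            have e2 := hρ' 0 (by simp)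
            simp at e1 e2
            exact hs (by rw [← e1, ← e2])
          have := measure_mono (μ := Pr σv) hsub
          rw [measure_compl (measurable_Cyl _) (measure_ne_top _ _), h1,
            (hprob σv).measure_univ] at this
          simpa using le_antisymm (by simpa using this) zero_le
        · have hPl : Pr σv (G.Cyl l) = 0 := by
            rw [ih]; simp [hP, histl, hl0]
          exact measure_mono_null (Cyl_anti l [s]) hPl

end ConcGame


namespace ConcGame

variable {G : ConcGame}

/-- The cylinders form a π-system. -/
lemma isPiSystem_cyl :
    IsPiSystem {E : Set G.Run | ∃ m : List G.S, E = G.Cyl m} := by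
  rintro E1 ⟨m1, rfl⟩ E2 ⟨m2, rfl⟩ hne
  obtain ⟨ρ, h1, h2⟩ := hne
  rcases le_total m1.length m2.length with h | h
  · have hsub : G.Cyl m2 ⊆ G.Cyl m1 := fun ρ' hρ' i hi =>
      (hρ' i (lt_of_lt_of_le hi h)).trans
        (((h2 i (lt_of_lt_of_le hi h)).symm).trans (h1 i hi))
    rw [Set.inter_eq_self_of_subset_right hsub]
    exact ⟨m2, rfl⟩
  · have hsub : G.Cyl m1 ⊆ G.Cyl m2 := fun ρ' hρ' i hi =>
      (hρ' i (lt_of_lt_of_le hi h)).trans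
        (((h1 i (lt_of_lt_of_le hi h)).symm).trans (h2 i hi))
    rw [Set.inter_eq_self_of_subset_left hsub]
    exact ⟨m1, rfl⟩

/-- The product σ-algebra on runs is generated by the cylinders. -/
lemma run_generateFrom :
    (inferInstance : MeasurableSpace G.Run)
      = MeasurableSpace.generateFrom {E : Set G.Run | ∃ m : List G.S, E = G.Cyl m} := by
  set gen := MeasurableSpace.generateFrom {E : Set G.Run | ∃ m : List G.S, E = G.Cyl m}
    with hgen
  refine le_antisymm ?_ (MeasurableSpace.generateFrom_le ?_)
  · have key : ∀ (i : ℕ) (T : Set G.S),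
        MeasurableSet[gen] ((fun ρ : G.Run => ρ i) ⁻¹' T) := by
      intro i T
      have heq : (fun ρ : G.Run => ρ i) ⁻¹' T
          = ⋃ (m : List G.S) (_ : m.length = i + 1 ∧ m.getD i G.init ∈ T), G.Cyl m := by
        ext ρ
        simp only [Set.mem_preimage, Set.mem_iUnion]
        constructor
        · intro h
          refine ⟨(List.range (i+1)).map ρ, ⟨by simp, ?_⟩, ?_⟩
          · rw [List.getD_eq_getElem _ _ (by simp)]
            simpa using h
          · intro j hj
            simp only [List.length_map, List.length_range] at hj
            rw [List.getD_eq_getElem _ _ (by simpa using hj)]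
            simp
        · rintro ⟨m, ⟨hlen, hmem⟩, hρ⟩
          have := hρ i (by omega)
          rw [this]; exact hmem
      rw [heq]
      exact MeasurableSet.iUnion fun m => MeasurableSet.iUnion fun _ =>
        MeasurableSpace.measurableSet_generateFrom ⟨m, rfl⟩
    have hmeas : ∀ i : ℕ, @Measurable G.Run G.S gen _ (fun ρ => ρ i) :=
      fun i T _ => key i T
    have hid : @Measurable G.Run G.Run gen MeasurableSpace.pi id :=
      (@measurable_pi_iff G.Run ℕ (fun _ => G.S) gen _ id).mpr hmeas
    have hle := (@measurable_iff_comap_le G.Run G.Run gen MeasurableSpace.pi id).mp hid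
    rwa [MeasurableSpace.comap_id] at hle
  · rintro E ⟨m, rfl⟩
    exact measurable_Cyl m

/-- Pointwise decomposition of cylinder probabilities when a move is split at `l`. -/
lemma cylProb_decomp {p : G.P} (σ : G.Strategy p) (l : List G.S)
    (β1 β2 : G.Mixed p (G.lastS l)) (c d : ℝ) (hcd : c + d = 1)
    (hmix : ∀ b, (σ l).1 b = c * β1.1 b + d * β2.1 b)
    (τ : G.CoStrategy p) (m : List G.S) :
    G.cylProb (G.combine σ τ) m
      = c * G.cylProb (G.combine (modStrat σ l β1) τ) m
        + d * G.cylProb (G.combine (modStrat σ l β2) τ) m := by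
  set σv := G.combine σ τ with hσv
  set σv1 := G.combine (modStrat σ l β1) τ with hσv1
  set σv2 := G.combine (modStrat σ l β2) τ with hσv2
  set F := fun (w : G.Profile) (i : ℕ) =>
    G.stepProb (G.lastS (m.take (i+1))) (fun q => (w q (m.take (i+1))).1)
      (G.lastS (m.take (i+2))) with hF
  have hcyl : ∀ w : G.Profile, G.cylProb w m = ∏ i ∈ Finset.range (m.length - 1), F w i :=
    fun w => rfl
  have hfac_eq : ∀ i : ℕ, m.take (i+1) ≠ l → F σv1 i = F σv i ∧ F σv2 i = F σv i := by
    intro i hne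
    have hmv : ∀ q, (σv1 q (m.take (i+1))).1 = (σv q (m.take (i+1))).1
        ∧ (σv2 q (m.take (i+1))).1 = (σv q (m.take (i+1))).1 := by
      intro q
      by_cases hq : q = p
      · subst hq
        rw [hσv, hσv1, hσv2, combine_self, combine_self, combine_self,
          modStrat_ne _ _ _ hne, modStrat_ne _ _ _ hne]
        exact ⟨rfl, rfl⟩
      · rw [hσv, hσv1, hσv2, combine_ne _ _ hq, combine_ne _ _ hq, combine_ne _ _ hq]
        exact ⟨rfl, rfl⟩
    have hfun1 : (fun q => (σv1 q (m.take (i+1))).1) = fun q => (σv q (m.take (i+1))).1 :=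
      funext fun q => (hmv q).1
    have hfun2 : (fun q => (σv2 q (m.take (i+1))).1) = fun q => (σv q (m.take (i+1))).1 :=
      funext fun q => (hmv q).2
    constructor
    · simp only [hF]; rw [hfun1]
    · simp only [hF]; rw [hfun2]
  by_cases hex : ∃ i ∈ Finset.range (m.length - 1), m.take (i+1) = l
  · obtain ⟨i₀, hi₀, htake⟩ := hex
    have hi₀r := Finset.mem_range.mp hi₀
    subst htake
    have hrest : ∀ i ∈ (Finset.range (m.length - 1)).erase i₀,
        m.take (i+1) ≠ m.take (i₀+1) := by
      intro i hi hcontra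
      have hir := Finset.mem_range.mp (Finset.mem_of_mem_erase hi)
      have hne' := Finset.ne_of_mem_erase hi
      have h1 : (m.take (i+1)).length = i + 1 := by
        rw [List.length_take]; omega
      have h2 : (m.take (i₀+1)).length = i₀ + 1 := by
        rw [List.length_take]; omega
      rw [hcontra] at h1
      omega
    have hR1 : ∏ i ∈ (Finset.range (m.length - 1)).erase i₀, F σv1 i
        = ∏ i ∈ (Finset.range (m.length - 1)).erase i₀, F σv i :=
      Finset.prod_congr rfl fun i hi => (hfac_eq i (hrest i hi)).1
    have hR2 : ∏ i ∈ (Finset.range (m.length - 1)).erase i₀, F σv2 i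
        = ∏ i ∈ (Finset.range (m.length - 1)).erase i₀, F σv i :=
      Finset.prod_congr rfl fun i hi => (hfac_eq i (hrest i hi)).2
    have hkey : F σv i₀ = c * F σv1 i₀ + d * F σv2 i₀ := by
      rw [hF]
      refine stepProb_lin _ _ p _ _ _ c d ?_ ?_
      · intro q hq
        simp [hσv, hσv1, hσv2, combine_ne _ _ hq]
      · intro b
        simp only [hσv, hσv1, hσv2, combine_self, modStrat_self]
        exact hmix b
    rw [hcyl, hcyl, hcyl, ← Finset.mul_prod_erase _ _ hi₀, ← Finset.mul_prod_erase _ _ hi₀,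
      ← Finset.mul_prod_erase _ _ hi₀, hR1, hR2, hkey]
    ring
  · push_neg at hex
    have h1 : ∏ i ∈ Finset.range (m.length - 1), F σv1 i
        = ∏ i ∈ Finset.range (m.length - 1), F σv i :=
      Finset.prod_congr rfl fun i hi => (hfac_eq i (hex i hi)).1
    have h2 : ∏ i ∈ Finset.range (m.length - 1), F σv2 i
        = ∏ i ∈ Finset.range (m.length - 1), F σv i :=
      Finset.prod_congr rfl fun i hi => (hfac_eq i (hex i hi)).2
    rw [hcyl, hcyl, hcyl, h1, h2, ← add_mul, hcd, one_mul]

end ConcGame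


namespace ConcGame

variable {G : ConcGame}

lemma hP_decomp {p : G.P} (σ : G.Strategy p) (l : List G.S)
    (β1 β2 : G.Mixed p (G.lastS l)) (c d : ℝ) (hcd : c + d = 1)
    (hmix : ∀ b, (σ l).1 b = c * β1.1 b + d * β2.1 b)
    (τ : G.CoStrategy p) (m : List G.S) :
    G.hP (G.combine σ τ) m
      = c * G.hP (G.combine (modStrat σ l β1) τ) m
        + d * G.hP (G.combine (modStrat σ l β2) τ) m := by
  unfold hP
  split
  · exact cylProb_decomp σ l β1 β2 c d hcd hmix τ m
  · ring

lemma measure_decomp {Pr : G.Profile → Measure G.Run} (hPr : G.ValidPr Pr)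
    {p : G.P} (σ : G.Strategy p) (l : List G.S)
    (β1 β2 : G.Mixed p (G.lastS l)) (c d : ℝ) (hc : 0 ≤ c) (hd : 0 ≤ d) (hcd : c + d = 1)
    (hmix : ∀ b, (σ l).1 b = c * β1.1 b + d * β2.1 b)
    (τ : G.CoStrategy p) :
    Pr (G.combine σ τ) = ENNReal.ofReal c • Pr (G.combine (modStrat σ l β1) τ)
      + ENNReal.ofReal d • Pr (G.combine (modStrat σ l β2) τ) := by
  haveI := hPr.1 (G.combine σ τ)
  refine MeasureTheory.ext_of_generate_finite _ run_generateFrom isPiSystem_cyl ?_ ?_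
  · rintro E ⟨m, rfl⟩
    rw [pr_cyl hPr, MeasureTheory.Measure.add_apply, MeasureTheory.Measure.smul_apply,
      MeasureTheory.Measure.smul_apply, pr_cyl hPr, pr_cyl hPr,
      hP_decomp σ l β1 β2 c d hcd hmix τ m,
      ENNReal.ofReal_add (mul_nonneg hc (hP_nonneg _ _)) (mul_nonneg hd (hP_nonneg _ _)),
      ENNReal.ofReal_mul hc, ENNReal.ofReal_mul hd]
    rfl
  · rw [(hPr.1 _).measure_univ, MeasureTheory.Measure.add_apply,
      MeasureTheory.Measure.smul_apply, MeasureTheory.Measure.smul_apply,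
      (hPr.1 _).measure_univ, (hPr.1 _).measure_univ,
      smul_eq_mul, smul_eq_mul, mul_one, mul_one, ← ENNReal.ofReal_add hc hd, hcd]
    simp

end ConcGame

/-- a randomised move is weakly dominated at any history by each Dirac move
in its support. -/
theorem stmt1 (G : ConcGame) (win : G.P → Set G.Run)
    (hwin : ∀ p, MeasurableSet (win p))
    (Pr : G.Profile → Measure G.Run) (hPr : G.ValidPr Pr)
    (st : ConcGame.Sem) (p : G.P) (l : List G.S) (hl : G.IsHistory l)
    (α : G.Mixed p (G.lastS l)) (a : G.A) (ha : a ∈ G.Supp α) :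
    G.MWDom Pr win st l α (G.dirac p (G.lastS l) a (α.2.2.2 a ha)) := by
  classical
  intro σ hhist hσl
  have haa : α.1 a ≠ 0 := ha
  have hc0 : 0 < α.1 a := lt_of_le_of_ne (α.2.1 a) (Ne.symm haa)
  have hc1 : α.1 a ≤ 1 := by
    have h2 := Finset.single_le_sum (f := α.1) (fun b _ => α.2.1 b) (Finset.mem_univ a)
    rwa [α.2.2.1] at h2
  have hαdirac : α.1 a = 1 → ∀ b, α.1 b = if b = a then 1 else 0 := by
    intro h1 b
    by_cases hb : b = a
    · subst hb; rw [if_pos rfl, h1]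
    · rw [if_neg hb]
      have hsum := α.2.2.1
      rw [← Finset.add_sum_erase _ _ (Finset.mem_univ a)] at hsum
      have h0 : ∑ x ∈ Finset.univ.erase a, α.1 x = 0 := by linarith
      exact (Finset.sum_eq_zero_iff_of_nonneg fun x _ => α.2.1 x).mp h0 b
        (Finset.mem_erase.mpr ⟨hb, Finset.mem_univ b⟩)
  have hβ2 : ∃ β2 : G.Mixed p (G.lastS l), ∀ b, α.1 b
      = α.1 a * (if b = a then 1 else 0) + (1 - α.1 a) * β2.1 b := by
    by_cases h1 : α.1 a = 1
    · refine ⟨α, fun b => ?_⟩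
      rw [hαdirac h1 b, h1]
      ring
    · have hlt : α.1 a < 1 := lt_of_le_of_ne hc1 h1
      refine ⟨⟨fun b => (α.1 b - α.1 a * (if b = a then 1 else 0)) / (1 - α.1 a),
        ?_, ?_, ?_⟩, fun b => ?_⟩
      · intro b
        apply div_nonneg _ (by linarith)
        by_cases hb : b = a
        · subst hb; rw [if_pos rfl]; linarith
        · rw [if_neg hb, mul_zero]
          have := α.2.1 b
          linarith
      · rw [← Finset.sum_div]
        have hs : ∑ b, (α.1 b - α.1 a * (if b = a then 1 else 0)) = 1 - α.1 a := by
          rw [Finset.sum_sub_distrib, α.2.2.1, ← Finset.mul_sum]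
          simp
        rw [hs]
        exact div_self (by linarith)
      · intro b hb
        by_cases hba : b = a
        · subst hba; exact α.2.2.2 b ha
        · apply α.2.2.2 b
          intro h0
          apply hb
          show (α.1 b - α.1 a * if b = a then 1 else 0) / (1 - α.1 a) = 0
          rw [h0, if_neg hba]
          simp
      · have hne : (1 : ℝ) - α.1 a ≠ 0 := by intro h; apply h1; linarith
        field_simp
        ring
  obtain ⟨β2, hmix⟩ := hβ2
  refine ⟨ConcGame.modStrat σ l (G.dirac p (G.lastS l) a (α.2.2.2 a ha)),
    ConcGame.modStrat_self _ _ _, ?_⟩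
  have hmix' : ∀ b, (σ l).1 b
      = α.1 a * (G.dirac p (G.lastS l) a (α.2.2.2 a ha)).1 b + (1 - α.1 a) * β2.1 b := by
    intro b; rw [hσl]; exact hmix b
  intro τ hw
  have hdec := fun m => ConcGame.cylProb_decomp σ l
    (G.dirac p (G.lastS l) a (α.2.2.2 a ha)) β2 (α.1 a) (1 - α.1 a) (by ring) hmix' τ m
  cases st with
  | Sure =>
    simp only [ConcGame.Wins] at hw ⊢
    intro ρ hρ
    apply hw
    intro k
    obtain ⟨hh, hpos⟩ := hρ k
    refine ⟨hh, ?_⟩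
    have h2 := ConcGame.cylProb_nonneg (G.combine (ConcGame.modStrat σ l β2) τ)
      (G.prefixList ρ k)
    have h3 := hdec (G.prefixList ρ k)
    nlinarith [hpos, hc0, hc1]
  | Almost =>
    haveI := hPr.1 (G.combine σ τ)
    haveI := hPr.1 (G.combine (ConcGame.modStrat σ l
      (G.dirac p (G.lastS l) a (α.2.2.2 a ha))) τ)
    simp only [ConcGame.Wins] at hw ⊢
    have hμ := ConcGame.measure_decomp hPr σ l
      (G.dirac p (G.lastS l) a (α.2.2.2 a ha)) β2 (α.1 a) (1 - α.1 a)
      (le_of_lt hc0) (by linarith) (by ring) hmix' τ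
    have hcompl : Pr (G.combine σ τ) (win p)ᶜ = 0 :=
      (MeasureTheory.prob_compl_eq_zero_iff (hwin p)).mpr hw
    rw [hμ, MeasureTheory.Measure.add_apply, MeasureTheory.Measure.smul_apply,
      MeasureTheory.Measure.smul_apply, smul_eq_mul, smul_eq_mul] at hcompl
    have hz := (add_eq_zero.mp hcompl).1
    have h0 : Pr (G.combine (ConcGame.modStrat σ l
        (G.dirac p (G.lastS l) a (α.2.2.2 a ha))) τ) (win p)ᶜ = 0 := by
      rcases mul_eq_zero.mp hz with h | h
      · exfalso
        rw [ENNReal.ofReal_eq_zero] at h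
        linarith
      · exact h
    exact (MeasureTheory.prob_compl_eq_zero_iff (hwin p)).mp h0
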